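/- In the group G_4^3, the subgroup C generated by the three elements abc, bca, cab is a normal subgroup of G_4^3. -/

import Mathlib

/-- The generators of the free group on four letters `a, b, c, d`. -/
def x : Fin 4 → FreeGroup (Fin 4) := FreeGroup.of

/-- The relators of the group `G_4^3`:
`a², b², c², d², (abcd)², (bcad)², (cabd)²`. -/
def rels43 : Set (FreeGroup (Fin 4)) :=
  {x 0 ^ 2, x 1 ^ 2, x 2 ^ 2, x 3 ^ 2,
    (x 0 * x 1 * x 2 * x 3) ^ 2, (x 1 * x 2 * x 0 * x 3) ^ 2, (x 2 * x 0 * x 1 * x 3) ^ 2}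

/-- The group `G_4^3`. -/
abbrev G43 : Type := PresentedGroup rels43

/-- The generator `a` of `G_4^3`. -/
def ga : G43 := PresentedGroup.of (rels := rels43) 0
/-- The generator `b` of `G_4^3`. -/
def gb : G43 := PresentedGroup.of (rels := rels43) 1
/-- The generator `c` of `G_4^3`. -/
def gc : G43 := PresentedGroup.of (rels := rels43) 2
/-- The generator `d` of `G_4^3`. -/
def gd : G43 := PresentedGroup.of (rels := rels43) 3

lemma rel_one {r : FreeGroup (Fin 4)} (h : r ∈ rels43) :
    PresentedGroup.mk rels43 r = 1 :=
  (QuotientGroup.eq_one_iff r).mpr (Subgroup.subset_normalClosure h)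

lemma mem_normalizer_of_conj {G : Type*} [Group G] {S : Set G} {g : G}
    (hg : g * g = 1)
    (h : ∀ s ∈ S, g * s * g⁻¹ ∈ Subgroup.closure S) :
    g ∈ Subgroup.normalizer (Subgroup.closure S : Set G) := by
  have hginv : g⁻¹ = g := inv_eq_of_mul_eq_one_right hg
  have hgg : ∀ t : G, g * (g * t) = t := fun t => by rw [← mul_assoc, hg, one_mul]
  have key : ∀ n ∈ Subgroup.closure S, g * n * g⁻¹ ∈ Subgroup.closure S := by
    intro n hn
    have hmap : Subgroup.map (MulAut.conj g).toMonoidHom (Subgroup.closure S)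
        ≤ Subgroup.closure S := by
      rw [MonoidHom.map_closure]
      refine (Subgroup.closure_le _).mpr ?_
      rintro _ ⟨s, hs, rfl⟩
      simpa using h s hs
    have : g * n * g⁻¹ ∈ Subgroup.map (MulAut.conj g).toMonoidHom (Subgroup.closure S) :=
      ⟨n, hn, by simp⟩
    exact hmap this
  rw [Subgroup.mem_normalizer_iff]
  intro n
  constructor
  · exact fun hn => key n hn
  · intro hn
    have h2 := key _ hn
    have e : g * (g * n * g⁻¹) * g⁻¹ = n := by
      rw [hginv]; simp [mul_assoc, hg, hgg]
    rwa [e] at h2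

theorem stmt_2 :
    (Subgroup.closure {ga * gb * gc, gb * gc * ga, gc * ga * gb} : Subgroup G43).Normal := by
  -- squares of generators are 1
  have ha1 : ga * ga = 1 := by
    have := rel_one (show x 0 ^ 2 ∈ rels43 by simp [rels43])
    rwa [sq, map_mul] at this
  have hb1 : gb * gb = 1 := by
    have := rel_one (show x 1 ^ 2 ∈ rels43 by simp [rels43])
    rwa [sq, map_mul] at this
  have hc1 : gc * gc = 1 := by
    have := rel_one (show x 2 ^ 2 ∈ rels43 by simp [rels43])
    rwa [sq, map_mul] at this
  have hd1 : gd * gd = 1 := by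
    have := rel_one (show x 3 ^ 2 ∈ rels43 by simp [rels43])
    rwa [sq, map_mul] at this
  have ha' : ga⁻¹ = ga := inv_eq_of_mul_eq_one_right ha1
  have hb' : gb⁻¹ = gb := inv_eq_of_mul_eq_one_right hb1
  have hc' : gc⁻¹ = gc := inv_eq_of_mul_eq_one_right hc1
  have hd' : gd⁻¹ = gd := inv_eq_of_mul_eq_one_right hd1
  have haa : ∀ t : G43, ga * (ga * t) = t := fun t => by rw [← mul_assoc, ha1, one_mul]
  have hbb : ∀ t : G43, gb * (gb * t) = t := fun t => by rw [← mul_assoc, hb1, one_mul]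
  have hcc : ∀ t : G43, gc * (gc * t) = t := fun t => by rw [← mul_assoc, hc1, one_mul]
  have hdd : ∀ t : G43, gd * (gd * t) = t := fun t => by rw [← mul_assoc, hd1, one_mul]
  -- the three relations involving d
  have habcd : (ga * gb * gc * gd) * (ga * gb * gc * gd) = 1 := by
    have := rel_one (show (x 0 * x 1 * x 2 * x 3) ^ 2 ∈ rels43 by simp [rels43])
    rwa [sq, map_mul, map_mul, map_mul, map_mul] at this
  have hbcad : (gb * gc * ga * gd) * (gb * gc * ga * gd) = 1 := by
    have := rel_one (show (x 1 * x 2 * x 0 * x 3) ^ 2 ∈ rels43 by simp [rels43])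
    rwa [sq, map_mul, map_mul, map_mul, map_mul] at this
  have hcabd : (gc * ga * gb * gd) * (gc * ga * gb * gd) = 1 := by
    have := rel_one (show (x 2 * x 0 * x 1 * x 3) ^ 2 ∈ rels43 by simp [rels43])
    rwa [sq, map_mul, map_mul, map_mul, map_mul] at this
  set S : Set G43 := {ga * gb * gc, gb * gc * ga, gc * ga * gb} with hS
  set H : Subgroup G43 := Subgroup.closure S with hH
  have hu : ga * gb * gc ∈ H := Subgroup.subset_closure (by simp [hS])
  have hv : gb * gc * ga ∈ H := Subgroup.subset_closure (by simp [hS])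
  have hw : gc * ga * gb ∈ H := Subgroup.subset_closure (by simp [hS])
  have hna : ga ∈ Subgroup.normalizer (H : Set G43) := by
    refine mem_normalizer_of_conj ha1 ?_
    intro s hs
    simp only [hS, Set.mem_insert_iff, Set.mem_singleton_iff] at hs
    rcases hs with rfl | rfl | rfl
    · have e : ga * (ga * gb * gc) * ga⁻¹ = gb * gc * ga := by
        simp [ha', mul_assoc, haa, hbb, hcc, ha1, hb1, hc1]
      rw [e]; exact hv
    · have e : ga * (gb * gc * ga) * ga⁻¹ = ga * gb * gc := by
        simp [ha', mul_assoc, haa, hbb, hcc, ha1, hb1, hc1]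
      rw [e]; exact hu
    · have e : ga * (gc * ga * gb) * ga⁻¹ =
          (gb * gc * ga)⁻¹ * (gc * ga * gb)⁻¹ * (ga * gb * gc)⁻¹ := by
        simp [ha', hb', hc', mul_inv_rev, mul_assoc, haa, hbb, hcc, ha1, hb1, hc1]
      rw [e]; exact mul_mem (mul_mem (inv_mem hv) (inv_mem hw)) (inv_mem hu)
  have hnb : gb ∈ Subgroup.normalizer (H : Set G43) := by
    refine mem_normalizer_of_conj hb1 ?_
    intro s hs
    simp only [hS, Set.mem_insert_iff, Set.mem_singleton_iff] at hs
    rcases hs with rfl | rfl | rfl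
    · have e : gb * (ga * gb * gc) * gb⁻¹ =
          (gc * ga * gb)⁻¹ * (ga * gb * gc)⁻¹ * (gb * gc * ga)⁻¹ := by
        simp [ha', hb', hc', mul_inv_rev, mul_assoc, haa, hbb, hcc, ha1, hb1, hc1]
      rw [e]; exact mul_mem (mul_mem (inv_mem hw) (inv_mem hu)) (inv_mem hv)
    · have e : gb * (gb * gc * ga) * gb⁻¹ = gc * ga * gb := by
        simp [hb', mul_assoc, haa, hbb, hcc, ha1, hb1, hc1]
      rw [e]; exact hw
    · have e : gb * (gc * ga * gb) * gb⁻¹ = gb * gc * ga := by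
        simp [hb', mul_assoc, haa, hbb, hcc, ha1, hb1, hc1]
      rw [e]; exact hv
  have hnc : gc ∈ Subgroup.normalizer (H : Set G43) := by
    refine mem_normalizer_of_conj hc1 ?_
    intro s hs
    simp only [hS, Set.mem_insert_iff, Set.mem_singleton_iff] at hs
    rcases hs with rfl | rfl | rfl
    · have e : gc * (ga * gb * gc) * gc⁻¹ = gc * ga * gb := by
        simp [hc', mul_assoc, haa, hbb, hcc, ha1, hb1, hc1]
      rw [e]; exact hw
    · have e : gc * (gb * gc * ga) * gc⁻¹ =
          (ga * gb * gc)⁻¹ * (gb * gc * ga)⁻¹ * (gc * ga * gb)⁻¹ := by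
        simp [ha', hb', hc', mul_inv_rev, mul_assoc, haa, hbb, hcc, ha1, hb1, hc1]
      rw [e]; exact mul_mem (mul_mem (inv_mem hu) (inv_mem hv)) (inv_mem hw)
    · have e : gc * (gc * ga * gb) * gc⁻¹ = ga * gb * gc := by
        simp [hc', mul_assoc, haa, hbb, hcc, ha1, hb1, hc1]
      rw [e]; exact hu
  have hnd : gd ∈ Subgroup.normalizer (H : Set G43) := by
    refine mem_normalizer_of_conj hd1 ?_
    intro s hs
    simp only [hS, Set.mem_insert_iff, Set.mem_singleton_iff] at hs
    rcases hs with rfl | rfl | rfl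
    · have e : gd * (ga * gb * gc) * gd⁻¹ = (ga * gb * gc)⁻¹ := by
        rw [eq_comm, inv_eq_iff_mul_eq_one, hd']
        simpa only [mul_assoc] using habcd
      rw [e]; exact inv_mem hu
    · have e : gd * (gb * gc * ga) * gd⁻¹ = (gb * gc * ga)⁻¹ := by
        rw [eq_comm, inv_eq_iff_mul_eq_one, hd']
        simpa only [mul_assoc] using hbcad
      rw [e]; exact inv_mem hv
    · have e : gd * (gc * ga * gb) * gd⁻¹ = (gc * ga * gb)⁻¹ := by
        rw [eq_comm, inv_eq_iff_mul_eq_one, hd']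
        simpa only [mul_assoc] using hcabd
      rw [e]; exact inv_mem hw
  rw [← Subgroup.normalizer_eq_top_iff, Subgroup.eq_top_iff']
  intro g
  refine PresentedGroup.generated_by rels43 _ ?_ g
  intro j
  fin_cases j
  · exact hna
  · exact hnb
  · exact hnc
  · exact hnd
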